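/- (Necessary condition for a local minimum of the Fréchet function.) Let X₁, …, X_m : Fin J → E be configurations and F(Z) = (1/m) ∑_{j=1}^m D(Z, Xⱼ)². Suppose W : Fin J → E is a local minimum of F, i.e. there exists r > 0 such that F(Z) ≥ F(W) for every Z : Fin J → E with ‖Z i − W i‖ < r for all i. Then: (a) for every choice of optimal pairings σⱼ between W and Xⱼ, W i = (1/m) • ∑_{j=1}^m Xⱼ (σⱼ i) for every i (each point of W is the arithmetic mean of its paired points); and (b) the optimal pairing to each Xⱼ is unique in the sense that if σⱼ and σ'ⱼ are both optimal pairings between W and Xⱼ, then Xⱼ (σⱼ i) = Xⱼ (σ'ⱼ i) for all i. -/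

import Mathlib

open RealInnerProductSpace

/-- The squared L²-matching distance between two configurations of `J` points. -/
noncomputable def sqD {E : Type*} [NormedAddCommGroup E] [InnerProductSpace ℝ E] {J : ℕ}
    (X Y : Fin J → E) : ℝ :=
  ⨅ σ : Equiv.Perm (Fin J), ∑ i, ‖X i - Y (σ i)‖ ^ 2

lemma sqD_le {E : Type*} [NormedAddCommGroup E] [InnerProductSpace ℝ E] {J : ℕ}
    (X Y : Fin J → E) (σ : Equiv.Perm (Fin J)) :
    sqD X Y ≤ ∑ i, ‖X i - Y (σ i)‖ ^ 2 :=
  ciInf_le (Set.Finite.bddBelow (Set.finite_range _)) σ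

lemma exists_opt {E : Type*} [NormedAddCommGroup E] [InnerProductSpace ℝ E] {J : ℕ}
    (X Y : Fin J → E) :
    ∃ σ : Equiv.Perm (Fin J), ∑ i, ‖X i - Y (σ i)‖ ^ 2 = sqD X Y := by
  obtain ⟨σ, hσ⟩ := Finite.exists_min (fun σ : Equiv.Perm (Fin J) => ∑ i, ‖X i - Y (σ i)‖ ^ 2)
  exact ⟨σ, le_antisymm (le_ciInf hσ) (sqD_le X Y σ)⟩

lemma key_sum {E : Type*} [NormedAddCommGroup E] [InnerProductSpace ℝ E] {m : ℕ}
    (A : Fin m → E) (w d : E) (t : ℝ)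
    (hw : ∑ j, (w - A j) = -((m : ℝ) • d)) :
    ∑ j, ‖(w + t • d) - A j‖ ^ 2
      = ∑ j, ‖w - A j‖ ^ 2 + (m : ℝ) * (t ^ 2 - 2 * t) * ‖d‖ ^ 2 := by
  have h1 : ∀ j : Fin m, ‖(w + t • d) - A j‖ ^ 2
      = ‖w - A j‖ ^ 2 + 2 * (t * ⟪w - A j, d⟫) + t ^ 2 * ‖d‖ ^ 2 := by
    intro j
    have h : (w + t • d) - A j = (w - A j) + t • d := by abel
    rw [h, norm_add_sq_real, real_inner_smul_right, norm_smul]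
    simp [mul_pow, sq_abs]
  rw [Finset.sum_congr rfl fun j _ => h1 j]
  rw [Finset.sum_add_distrib, Finset.sum_add_distrib]
  have h2 : ∑ j : Fin m, 2 * (t * ⟪w - A j, d⟫) = 2 * t * ⟪∑ j : Fin m, (w - A j), d⟫ := by
    rw [sum_inner, Finset.mul_sum]
    apply Finset.sum_congr rfl
    intro j _; ring
  rw [h2, hw, inner_neg_left, real_inner_smul_left, real_inner_self_eq_norm_sq]
  rw [Finset.sum_const, Finset.card_univ, Fintype.card_fin, nsmul_eq_mul]
  ring

theorem local_min_frechet_necessary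
    {E : Type*} [NormedAddCommGroup E] [InnerProductSpace ℝ E] (m J : ℕ) (hm : 1 ≤ m)
    (X : Fin m → Fin J → E) (W : Fin J → E)
    (hloc : ∃ r > (0 : ℝ), ∀ Z : Fin J → E, (∀ i, ‖Z i - W i‖ < r) →
      (1 / m : ℝ) * ∑ j, sqD W (X j) ≤ (1 / m : ℝ) * ∑ j, sqD Z (X j)) :
    (∀ σ : Fin m → Equiv.Perm (Fin J),
      (∀ j, ∑ i, ‖W i - X j (σ j i)‖ ^ 2 = sqD W (X j)) →
      ∀ i, W i = (1 / m : ℝ) • ∑ j, X j (σ j i)) ∧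
    (∀ j, ∀ σ σ' : Equiv.Perm (Fin J),
      ∑ i, ‖W i - X j (σ i)‖ ^ 2 = sqD W (X j) →
      ∑ i, ‖W i - X j (σ' i)‖ ^ 2 = sqD W (X j) →
      ∀ i, X j (σ i) = X j (σ' i)) := by
  classical
  have hm0 : (0 : ℝ) < m := by exact_mod_cast hm
  have ha : ∀ σ : Fin m → Equiv.Perm (Fin J),
      (∀ j, ∑ i, ‖W i - X j (σ j i)‖ ^ 2 = sqD W (X j)) →
      ∀ i, W i = (1 / m : ℝ) • ∑ j, X j (σ j i) := by
    intro σ hσ i0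
    by_contra hne
    obtain ⟨r, hr, hmin⟩ := hloc
    set C : Fin J → E := fun i => (1 / m : ℝ) • ∑ j, X j (σ j i) with hC
    set d : Fin J → E := fun i => C i - W i with hd
    have hd0 : d i0 ≠ 0 := by
      simp only [hd, hC]
      exact sub_ne_zero.mpr fun h => hne h.symm
    set S := ∑ i, ‖d i‖ ^ 2 with hS
    have hSpos : 0 < S :=
      Finset.sum_pos' (fun i _ => by positivity)
        ⟨i0, Finset.mem_univ _, pow_pos (norm_pos_iff.mpr hd0) 2⟩
    set M := ∑ i, ‖d i‖ with hM
    have hMnn : 0 ≤ M := Finset.sum_nonneg fun i _ => norm_nonneg _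
    have hdM : ∀ i, ‖d i‖ ≤ M := fun i =>
      Finset.single_le_sum (fun i _ => norm_nonneg _) (Finset.mem_univ i)
    set t := min (1/2 : ℝ) (r / (M + 1)) with ht
    have htpos : 0 < t := lt_min (by norm_num) (by positivity)
    have ht2 : t ≤ 1/2 := min_le_left _ _
    have htr : t * (M + 1) ≤ r := by
      have h := min_le_right (1/2 : ℝ) (r / (M + 1))
      rw [le_div_iff₀ (by positivity)] at h
      exact h
    set Z : Fin J → E := fun i => W i + t • d i with hZ
    have hZr : ∀ i, ‖Z i - W i‖ < r := by
      intro i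
      have he : ‖Z i - W i‖ = t * ‖d i‖ := by
        simp [hZ, norm_smul, abs_of_pos htpos]
      rw [he]
      nlinarith [hdM i, norm_nonneg (d i)]
    have hkey : ∀ i, ∑ j, ‖Z i - X j (σ j i)‖ ^ 2
        = ∑ j, ‖W i - X j (σ j i)‖ ^ 2 + (m : ℝ) * (t ^ 2 - 2 * t) * ‖d i‖ ^ 2 := by
      intro i
      have hsum : ∑ j : Fin m, X j (σ j i) = (m : ℝ) • C i := by
        simp only [hC, smul_smul]
        rw [mul_one_div, div_self (ne_of_gt hm0), one_smul]
      have hw : ∑ j : Fin m, (W i - X j (σ j i)) = -((m : ℝ) • d i) := by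
        rw [Finset.sum_sub_distrib, hsum, Finset.sum_const, Finset.card_univ, Fintype.card_fin]
        simp only [hd]
        rw [smul_sub, neg_sub, ← Nat.cast_smul_eq_nsmul ℝ]
      simpa [hZ] using key_sum (fun j => X j (σ j i)) (W i) (d i) t hw
    have h1 : ∑ j, sqD Z (X j) ≤ ∑ j, sqD W (X j) + (m : ℝ) * (t ^ 2 - 2 * t) * S :=
      calc ∑ j, sqD Z (X j) ≤ ∑ j, ∑ i, ‖Z i - X j (σ j i)‖ ^ 2 :=
            Finset.sum_le_sum fun j _ => sqD_le Z (X j) (σ j)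
        _ = ∑ i, ∑ j, ‖Z i - X j (σ j i)‖ ^ 2 := Finset.sum_comm
        _ = ∑ i, (∑ j, ‖W i - X j (σ j i)‖ ^ 2 + (m : ℝ) * (t ^ 2 - 2 * t) * ‖d i‖ ^ 2) :=
            Finset.sum_congr rfl fun i _ => hkey i
        _ = ∑ i, ∑ j, ‖W i - X j (σ j i)‖ ^ 2 + (m : ℝ) * (t ^ 2 - 2 * t) * S := by
            rw [Finset.sum_add_distrib, ← Finset.mul_sum]
        _ = ∑ j, ∑ i, ‖W i - X j (σ j i)‖ ^ 2 + (m : ℝ) * (t ^ 2 - 2 * t) * S := by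
            rw [Finset.sum_comm]
        _ = ∑ j, sqD W (X j) + (m : ℝ) * (t ^ 2 - 2 * t) * S := by
            rw [Finset.sum_congr rfl fun j _ => hσ j]
    have h2 := hmin Z hZr
    have h3 : ∑ j, sqD W (X j) ≤ ∑ j, sqD Z (X j) :=
      (mul_le_mul_iff_right₀ (by positivity : (0:ℝ) < 1 / m)).mp h2
    nlinarith [mul_pos (mul_pos hm0 htpos) hSpos]
  refine ⟨ha, ?_⟩
  intro j σ σ' hσ hσ' i
  choose τ hτ using fun j' => exists_opt W (X j')
  have hcond : ∀ (ρ : Equiv.Perm (Fin J)), (∑ i, ‖W i - X j (ρ i)‖ ^ 2 = sqD W (X j)) →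
      ∀ j', ∑ i, ‖W i - X j' (Function.update τ j ρ j' i)‖ ^ 2 = sqD W (X j') := by
    intro ρ hρ j'
    rcases eq_or_ne j' j with rfl | hne
    · simpa using hρ
    · simpa [Function.update_of_ne hne] using hτ j'
  have e1 := ha (Function.update τ j σ) (hcond σ hσ) i
  have e2 := ha (Function.update τ j σ') (hcond σ' hσ') i
  have hsmul : (1 / m : ℝ) • ∑ j', X j' (Function.update τ j σ j' i)
      = (1 / m : ℝ) • ∑ j', X j' (Function.update τ j σ' j' i) := by rw [← e1, ← e2]
  have hssum : ∑ j', X j' (Function.update τ j σ j' i)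
      = ∑ j', X j' (Function.update τ j σ' j' i) :=
    smul_right_injective E (by positivity : (1 / m : ℝ) ≠ 0) hsmul
  have hdiff : X j (σ i) - X j (σ' i) = 0 := by
    have h0 : ∑ j', (X j' (Function.update τ j σ j' i) - X j' (Function.update τ j σ' j' i)) = 0 := by
      rw [Finset.sum_sub_distrib, hssum, sub_self]
    rw [Finset.sum_eq_single j] at h0
    · simpa using h0
    · intro b _ hb; simp [Function.update_of_ne hb]
    · intro h; exact absurd (Finset.mem_univ j) h
  exact sub_eq_zero.mp hdiff
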